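/- For the trigonometric systems on nested intervals: for j ≥ 1 and 1 ≤ i, the cross inner product between a local cosine basis function on a subinterval and a global one satisfies |∫_{k/s}^{(k+1)/s} √s φⱼ(s x − k) φᵢ(x) dx| ≤ C j^{−2} i², for a universal constant C, where φⱼ(u) = √2 cos(π j u). -/

import Mathlib

open Real intervalIntegral

lemma int_cos_lin (a b p q : ℝ) (ha : a ≠ 0) :
    ∫ x in p..q, Real.cos (a * x + b) = (Real.sin (a * q + b) - Real.sin (a * p + b)) / a := by
  rw [intervalIntegral.integral_comp_mul_add Real.cos ha b, integral_cos]
  simp [smul_eq_mul]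
  ring

lemma aux1 (s k j i : ℝ) (hs : s ≠ 0) :
    (Real.pi*(j*s) - Real.pi*i) * (k/s) + (-(Real.pi*j*k)) = -(Real.pi*i*k/s) := by
  field_simp; ring

lemma aux2 (s k j i : ℝ) (hs : s ≠ 0) :
    (Real.pi*(j*s) + Real.pi*i) * (k/s) + (-(Real.pi*j*k)) = Real.pi*i*k/s := by
  field_simp; ring

lemma aux3 (s k j i : ℝ) (hs : s ≠ 0) :
    (Real.pi*(j*s) - Real.pi*i) * ((k+1)/s) + (-(Real.pi*j*k))
      = Real.pi*j - Real.pi*i*(k+1)/s := by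
  field_simp; ring

lemma aux4 (s k j i : ℝ) (hs : s ≠ 0) :
    (Real.pi*(j*s) + Real.pi*i) * ((k+1)/s) + (-(Real.pi*j*k))
      = Real.pi*j + Real.pi*i*(k+1)/s := by
  field_simp; ring

lemma aux5 (c A B α γ : ℝ) (hα : α ≠ 0) (hγ : γ ≠ 0) :
    c * ((-A - -B) / α + (A - B) / γ) = c * (A - B) * (α - γ) / (α * γ) := by
  field_simp; ring

set_option maxHeartbeats 1600000 in
/-- Cross inner products between the rescaled cosine basis `φ_{skj}(x) = √s φⱼ(sx − k)`
on `[k/s, (k+1)/s]` and the global cosine basis `φᵢ` satisfy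
`|∫_{k/s}^{(k+1)/s} φ_{skj} φᵢ| ≤ C j^{-2} i²` for a universal constant `C`. -/
theorem stmt_16 :
    ∃ C : ℝ, 0 < C ∧ ∀ s k j i : ℕ, 1 ≤ s → k ≤ s - 1 → 1 ≤ j → 1 ≤ i →
      |∫ x in ((k : ℝ) / s)..((k + 1 : ℝ) / s),
          (Real.sqrt s * (Real.sqrt 2 * Real.cos (Real.pi * j * (s * x - k)))) *
            (Real.sqrt 2 * Real.cos (Real.pi * i * x))| ≤
        C * (i : ℝ) ^ 2 / (j : ℝ) ^ 2 := by
  refine ⟨8, by norm_num, ?_⟩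
  intro s k j i hs hk hj hi
  have hs0 : (0:ℝ) < s := by exact_mod_cast hs
  have hs1 : (1:ℝ) ≤ s := by exact_mod_cast hs
  have hj1 : (1:ℝ) ≤ j := by exact_mod_cast hj
  have hi1 : (1:ℝ) ≤ i := by exact_mod_cast hi
  have hj0 : (0:ℝ) < j := by linarith
  have hi0 : (0:ℝ) < i := by linarith
  have hpi := Real.pi_pos
  have hpi3 := Real.pi_gt_three
  have hsne : (s:ℝ) ≠ 0 := ne_of_gt hs0
  set p : ℝ := (k:ℝ) / s with hp
  set q : ℝ := ((k:ℝ) + 1) / s with hq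
  set α : ℝ := Real.pi * (j * s) - Real.pi * i with hα
  set γ : ℝ := Real.pi * (j * s) + Real.pi * i with hγ
  set β : ℝ := -(Real.pi * j * k) with hβ
  have key : ∀ x : ℝ,
      (Real.sqrt s * (Real.sqrt 2 * Real.cos (Real.pi * j * (s * x - k)))) *
        (Real.sqrt 2 * Real.cos (Real.pi * i * x))
      = Real.sqrt s * (Real.cos (α * x + β) + Real.cos (γ * x + β)) := by
    intro x
    have h2 : Real.sqrt 2 * Real.sqrt 2 = 2 := Real.mul_self_sqrt (by norm_num)
    have hcc : Real.cos (Real.pi * j * (s * x - k)) * Real.cos (Real.pi * i * x)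
        = (Real.cos (α * x + β) + Real.cos (γ * x + β)) / 2 := by
      rw [show α * x + β = Real.pi * j * (s * x - k) - Real.pi * i * x by rw [hα, hβ]; ring,
        show γ * x + β = Real.pi * j * (s * x - k) + Real.pi * i * x by rw [hγ, hβ]; ring,
        Real.cos_sub, Real.cos_add]
      ring
    calc (Real.sqrt s * (Real.sqrt 2 * Real.cos (Real.pi * j * (s * x - k)))) *
          (Real.sqrt 2 * Real.cos (Real.pi * i * x))
        = Real.sqrt s * (Real.sqrt 2 * Real.sqrt 2) *
            (Real.cos (Real.pi * j * (s * x - k)) * Real.cos (Real.pi * i * x)) := by ring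
      _ = Real.sqrt s * (Real.cos (α * x + β) + Real.cos (γ * x + β)) := by
          rw [h2, hcc]; ring
  have ekey : (∫ x in p..q,
      (Real.sqrt s * (Real.sqrt 2 * Real.cos (Real.pi * j * (s * x - k)))) *
        (Real.sqrt 2 * Real.cos (Real.pi * i * x)))
      = ∫ x in p..q, Real.sqrt s * (Real.cos (α * x + β) + Real.cos (γ * x + β)) :=
    intervalIntegral.integral_congr (fun x _ => key x)
  rcases lt_or_ge (j * s) (2 * i) with hcase | hcase
  · -- trivial bound
    have hji : (j:ℝ) < 2 * i := by
      have h1 : j ≤ j * s := Nat.le_mul_of_pos_right _ (by omega)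
      have : j < 2 * i := lt_of_le_of_lt h1 hcase
      exact_mod_cast this
    have hbound : ∀ x ∈ Set.uIoc p q,
        ‖(Real.sqrt s * (Real.sqrt 2 * Real.cos (Real.pi * j * (s * x - k)))) *
          (Real.sqrt 2 * Real.cos (Real.pi * i * x))‖ ≤ Real.sqrt s * 2 := by
      intro x _
      have c1 := Real.abs_cos_le_one (Real.pi * j * (s * x - k))
      have c2 := Real.abs_cos_le_one (Real.pi * i * x)
      have h2 : Real.sqrt 2 * Real.sqrt 2 = 2 := Real.mul_self_sqrt (by norm_num)
      have hab : |Real.cos (Real.pi * j * (s * x - k))| * |Real.cos (Real.pi * i * x)| ≤ 1 := by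
        nlinarith [abs_nonneg (Real.cos (Real.pi * j * (s * x - k))),
          abs_nonneg (Real.cos (Real.pi * i * x))]
      simp only [Real.norm_eq_abs, abs_mul, abs_of_nonneg (Real.sqrt_nonneg (s:ℝ)),
        abs_of_nonneg (Real.sqrt_nonneg 2)]
      calc Real.sqrt s * (Real.sqrt 2 * |Real.cos (Real.pi * j * (s * x - k))|) *
            (Real.sqrt 2 * |Real.cos (Real.pi * i * x)|)
          = Real.sqrt s * ((Real.sqrt 2 * Real.sqrt 2) *
              (|Real.cos (Real.pi * j * (s * x - k))| * |Real.cos (Real.pi * i * x)|)) := by ring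
        _ ≤ Real.sqrt s * (2 * 1) := by
            rw [h2]
            gcongr
        _ = Real.sqrt s * 2 := by ring
    have hqp : q - p = 1 / s := by
      rw [hp, hq]; field_simp; ring
    have hlen : |q - p| = 1 / s := by
      rw [hqp, abs_of_pos (by positivity)]
    have hI := intervalIntegral.norm_integral_le_of_norm_le_const hbound
    rw [Real.norm_eq_abs] at hI
    rw [hlen] at hI
    have hsq : Real.sqrt s * 2 * (1 / s) ≤ 2 := by
      rw [mul_one_div]
      have h1 : Real.sqrt s ≤ s := Real.sqrt_le_iff.mpr ⟨le_of_lt hs0, by nlinarith⟩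
      rw [div_le_iff₀ hs0]
      nlinarith
    have h2le : (2:ℝ) ≤ 8 * (i:ℝ)^2 / (j:ℝ)^2 := by
      rw [le_div_iff₀ (by positivity)]
      nlinarith
    calc |∫ x in p..q,
          (Real.sqrt s * (Real.sqrt 2 * Real.cos (Real.pi * j * (s * x - k)))) *
            (Real.sqrt 2 * Real.cos (Real.pi * i * x))| ≤ Real.sqrt s * 2 * (1 / s) := hI
      _ ≤ 2 := hsq
      _ ≤ 8 * (i:ℝ)^2 / (j:ℝ)^2 := h2le
  · -- exact computation
    have h2i : 2 * (i:ℝ) ≤ (j:ℝ) * s := by exact_mod_cast hcase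
    have hij : (i:ℝ) < (j:ℝ) * s := by linarith
    have hα0 : 0 < α := by
      rw [hα]
      have := mul_lt_mul_of_pos_left hij hpi
      linarith
    have hγ0 : 0 < γ := by
      rw [hγ]
      have h1 := mul_pos hpi hi0
      have h2 := mul_pos hpi (mul_pos hj0 hs0)
      linarith
    have hαne : α ≠ 0 := ne_of_gt hα0
    have hγne : γ ≠ 0 := ne_of_gt hγ0
    have hint1 : IntervalIntegrable (fun x => Real.cos (α * x + β)) MeasureTheory.volume p q :=
      (Real.continuous_cos.comp ((continuous_const.mul continuous_id').add continuous_const)).intervalIntegrable _ _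
    have hint2 : IntervalIntegrable (fun x => Real.cos (γ * x + β)) MeasureTheory.volume p q :=
      (Real.continuous_cos.comp ((continuous_const.mul continuous_id').add continuous_const)).intervalIntegrable _ _
    have e1 : (∫ x in p..q, Real.sqrt s * (Real.cos (α * x + β) + Real.cos (γ * x + β)))
        = Real.sqrt s * ((Real.sin (α * q + β) - Real.sin (α * p + β)) / α
            + (Real.sin (γ * q + β) - Real.sin (γ * p + β)) / γ) := by
      rw [intervalIntegral.integral_const_mul, intervalIntegral.integral_add hint1 hint2,
        int_cos_lin _ _ _ _ hαne, int_cos_lin _ _ _ _ hγne]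
    set b : ℝ := Real.pi * i * k / s with hb
    set θ : ℝ := Real.pi * i * ((k:ℝ) + 1) / s with hθ
    have h1 : α * p + β = -b := aux1 (s:ℝ) k j i hsne
    have h2 : γ * p + β = b := aux2 (s:ℝ) k j i hsne
    have h3 : α * q + β = Real.pi * j - θ := aux3 (s:ℝ) k j i hsne
    have h4 : γ * q + β = Real.pi * j + θ := aux4 (s:ℝ) k j i hsne
    have hsj : Real.sin (Real.pi * j) = 0 := by
      rw [mul_comm]; exact Real.sin_nat_mul_pi j
    have hsin3 : Real.sin (Real.pi * j - θ) = -Real.sin (Real.pi * j + θ) := by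
      rw [Real.sin_sub, Real.sin_add, hsj]; ring
    set T : ℝ := Real.sin (Real.pi * j + θ) - Real.sin b with hT
    have e3 : (∫ x in p..q,
        (Real.sqrt s * (Real.sqrt 2 * Real.cos (Real.pi * j * (s * x - k)))) *
          (Real.sqrt 2 * Real.cos (Real.pi * i * x)))
        = Real.sqrt s * T * (α - γ) / (α * γ) := by
      rw [ekey, e1, h1, h2, h3, h4, hsin3, Real.sin_neg]
      exact aux5 _ _ _ _ _ hαne hγne
    rw [e3, abs_div, abs_mul, abs_mul]
    rw [abs_of_nonneg (Real.sqrt_nonneg (s:ℝ)), abs_of_pos (mul_pos hα0 hγ0)]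
    clear key ekey e1 e3 hint1 hint2
    clear_value p q α γ β b θ T
    have hπi := mul_pos hpi hi0
    have hαγ : |α - γ| = 2 * Real.pi * i := by
      have hh : Real.pi * ((j:ℝ) * s) - Real.pi * i - (Real.pi * ((j:ℝ) * s) + Real.pi * i) ≤ 0 := by
        linarith
      rw [hα, hγ, abs_of_nonpos hh]
      ring
    rw [hαγ]
    have hTb : |T| ≤ 2 := by
      rw [hT]
      calc |Real.sin (Real.pi * j + θ) - Real.sin b|
          ≤ |Real.sin (Real.pi * j + θ)| + |Real.sin b| := abs_sub _ _
        _ ≤ 1 + 1 := add_le_add (Real.abs_sin_le_one _) (Real.abs_sin_le_one _)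
        _ = 2 := by norm_num
    rw [div_le_div_iff₀ (mul_pos hα0 hγ0) (by positivity : (0:ℝ) < (j:ℝ)^2)]
    have hss : Real.sqrt s ≤ s := Real.sqrt_le_iff.mpr ⟨le_of_lt hs0, by nlinarith⟩
    have hssp : (0:ℝ) ≤ Real.sqrt s := Real.sqrt_nonneg _
    have hT0 : (0:ℝ) ≤ |T| := abs_nonneg _
    have step1 : Real.sqrt s * |T| * (2 * Real.pi * i) * (j:ℝ)^2
        ≤ (s:ℝ) * 2 * (2 * Real.pi * i) * (j:ℝ)^2 := by
      have : Real.sqrt s * |T| ≤ (s:ℝ) * 2 := by nlinarith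
      nlinarith [mul_pos (mul_pos (mul_pos two_pos hpi) hi0) (pow_pos hj0 2)]
    have step2 : (s:ℝ) * 2 * (2 * Real.pi * i) * (j:ℝ)^2 ≤ 8 * (i:ℝ)^2 * (α * γ) := by
      rw [hα, hγ]
      have hi2 : (i:ℝ)^2 ≤ ((j:ℝ) * s)^2 / 4 := by
        nlinarith [mul_le_mul h2i h2i (by positivity : (0:ℝ) ≤ 2*(i:ℝ))
          (by positivity : (0:ℝ) ≤ (j:ℝ)*s)]
      have h8 : (0:ℝ) ≤ 8 * Real.pi^2 * (i:ℝ)^2 := by positivity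
      have g1 : 6*Real.pi^2*(i:ℝ)^2*((j:ℝ)*s)^2
          ≤ 8*(i:ℝ)^2*((Real.pi*((j:ℝ)*s) - Real.pi*i)*(Real.pi*((j:ℝ)*s) + Real.pi*i)) := by
        nlinarith [mul_le_mul_of_nonneg_left hi2 h8]
      have hu1 : (1:ℝ) ≤ (i:ℝ)*s := by nlinarith
      have hu0 : (0:ℝ) ≤ (i:ℝ)*s := by positivity
      have ha : (7:ℝ) ≤ 3*Real.pi*((i:ℝ)*s) - 2 := by
        nlinarith [mul_le_mul_of_nonneg_right (le_of_lt hpi3) hu0]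
      have hb2 : (0:ℝ) ≤ 2*Real.pi*((i:ℝ)*s)*(j:ℝ)^2 := by positivity
      have g2 : (s:ℝ)*2*(2*Real.pi*i)*(j:ℝ)^2 ≤ 6*Real.pi^2*(i:ℝ)^2*((j:ℝ)*s)^2 := by
        nlinarith [mul_le_mul_of_nonneg_left ha hb2]
      linarith
    linarith
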